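/- arXiv:1911.02482 — 2 statements merged into one kernel-verified Lean document; each statement's English description precedes it below -/
import Mathlib

section
/- Let n ≥ 4, let V be an n-dimensional real vector space with a nondegenerate symmetric bilinear form g, and let B be a generalized curvature tensor on V such that (Ric(B))² is not a linear combination of g and Ric(B). If B = (φ/2)·Ric(B)∧Ric(B) + β₁·g∧(Ric(B))² + β₂·g∧Ric(B) + (β₃/2)·g∧g for some real numbers φ, β₁, β₂, β₃, then β₁ = φ/(n−2), β₂ = (1 − κ(B)·φ)/(n−2), and β₃ = (((κ(B))² − tr_g((Ric(B))²))·φ − κ(B))/((n−2)(n−1)). -/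
namespace OVAff

variable {V : Type*} [AddCommGroup V] [Module ℝ V]

/-- Kulkarni–Nomizu product of two (0,2)-tensors. -/
noncomputable def KN (E F : V → V → ℝ) : V → V → V → V → ℝ := fun X₁ X₂ X₃ X₄ =>
  E X₁ X₄ * F X₂ X₃ + E X₂ X₃ * F X₁ X₄ - E X₁ X₃ * F X₂ X₄ - E X₂ X₄ * F X₁ X₃

/-- Kulkarni–Nomizu product of a (0,2)-tensor with a (0,4)-tensor. -/
noncomputable def KN4 (E : V → V → ℝ) (T : V → V → V → V → ℝ) :
    V → V → V → V → V → V → ℝ := fun X₁ X₂ X₃ X₄ Y₁ Y₂ =>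
  E X₁ X₄ * T X₂ X₃ Y₁ Y₂ + E X₂ X₃ * T X₁ X₄ Y₁ Y₂
    - E X₁ X₃ * T X₂ X₄ Y₁ Y₂ - E X₂ X₄ * T X₁ X₃ Y₁ Y₂

/-- (X ∧_A Y) Z = A(Y,Z) X − A(X,Z) Y. -/
noncomputable def wedgeVec (A : V → V → ℝ) (X Y Z : V) : V := A Y Z • X - A X Z • Y

/-- Tachibana operator Q(A,T) on a (0,2)-tensor T. -/
noncomputable def Q2 (A T : V → V → ℝ) : V → V → V → V → ℝ :=
  fun X₁ X₂ X Y => -(T (wedgeVec A X Y X₁) X₂ + T X₁ (wedgeVec A X Y X₂))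

/-- Tachibana operator Q(A,T) on a (0,4)-tensor T. -/
noncomputable def Q4 (A : V → V → ℝ) (T : V → V → V → V → ℝ) :
    V → V → V → V → V → V → ℝ := fun X₁ X₂ X₃ X₄ X Y =>
  -(T (wedgeVec A X Y X₁) X₂ X₃ X₄ + T X₁ (wedgeVec A X Y X₂) X₃ X₄
    + T X₁ X₂ (wedgeVec A X Y X₃) X₄ + T X₁ X₂ X₃ (wedgeVec A X Y X₄))

/-- The derivation B·T of a curvature operator family ℬ (with h(ℬ(X,Y)Z,W)=B(X,Y,Z,W))
acting on a (0,2)-tensor T. -/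
noncomputable def dot2 (ℬ : V → V → V → V) (T : V → V → ℝ) : V → V → V → V → ℝ :=
  fun X₁ X₂ X Y => -(T (ℬ X Y X₁) X₂ + T X₁ (ℬ X Y X₂))

/-- The derivation B·T acting on a (0,4)-tensor T. -/
noncomputable def dot4 (ℬ : V → V → V → V) (T : V → V → V → V → ℝ) :
    V → V → V → V → V → V → ℝ := fun X₁ X₂ X₃ X₄ X Y =>
  -(T (ℬ X Y X₁) X₂ X₃ X₄ + T X₁ (ℬ X Y X₂) X₃ X₄
    + T X₁ X₂ (ℬ X Y X₃) X₄ + T X₁ X₂ X₃ (ℬ X Y X₄))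

/-- Ricci contraction of a (0,4)-tensor with respect to an h-orthonormal basis `e`
with signs `ε`. -/
noncomputable def ricci {n : ℕ} (ε : Fin n → ℝ) (e : Fin n → V)
    (B : V → V → V → V → ℝ) : V → V → ℝ :=
  fun X Y => ∑ j, ε j * B (e j) X Y (e j)

/-- Scalar curvature of a (0,4)-tensor. -/
noncomputable def scal {n : ℕ} (ε : Fin n → ℝ) (e : Fin n → V)
    (B : V → V → V → V → ℝ) : ℝ :=
  ∑ j, ε j * ricci ε e B (e j) (e j)

/-- Weyl tensor of a (0,4)-tensor with respect to the metric h. -/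
noncomputable def weyl {n : ℕ} (h : V → V → ℝ) (ε : Fin n → ℝ) (e : Fin n → V)
    (B : V → V → V → V → ℝ) : V → V → V → V → ℝ := fun X₁ X₂ X₃ X₄ =>
  B X₁ X₂ X₃ X₄ - (1 / ((n : ℝ) - 2)) * KN h (ricci ε e B) X₁ X₂ X₃ X₄
    + (scal ε e B / (2 * ((n : ℝ) - 2) * ((n : ℝ) - 1))) * KN h h X₁ X₂ X₃ X₄


/-- coefficients of a curvature-tensor decomposition are determined when
(Ric(B))² is not a combination of g and Ric(B). -/
theorem statement18
    {V : Type*} [AddCommGroup V] [Module ℝ V]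
    (n : ℕ) (hn : 4 ≤ n)
    (g : LinearMap.BilinForm ℝ V)
    (hgsymm : ∀ X Y, g X Y = g Y X)
    (hgnd : ∀ X : V, (∀ Y, g X Y = 0) → X = 0)
    (e : Module.Basis (Fin n) ℝ V) (ε : Fin n → ℝ)
    (hε : ∀ j, ε j = 1 ∨ ε j = -1)
    (he : ∀ j k, g (e j) (e k) = if j = k then ε j else 0)
    (B : V →ₗ[ℝ] V →ₗ[ℝ] V →ₗ[ℝ] V →ₗ[ℝ] ℝ)
    (Bf : V → V → V → V → ℝ) (hBf : Bf = fun X₁ X₂ X₃ X₄ => B X₁ X₂ X₃ X₄)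
    (hB1 : ∀ X₁ X₂ X₃ X₄, Bf X₁ X₂ X₃ X₄ = - Bf X₂ X₁ X₃ X₄)
    (hB2 : ∀ X₁ X₂ X₃ X₄, Bf X₁ X₂ X₃ X₄ = Bf X₃ X₄ X₁ X₂)
    (hB3 : ∀ X₁ X₂ X₃ X₄, Bf X₁ X₂ X₃ X₄ + Bf X₂ X₃ X₁ X₄ + Bf X₃ X₁ X₂ X₄ = 0)
    (Ric : V → V → ℝ) (hRic : Ric = ricci ε (⇑e) Bf)
    (κ : ℝ) (hκ : κ = scal ε (⇑e) Bf)
    (Wl : V → V → V → V → ℝ) (hWl : Wl = weyl (fun X Y => g X Y) ε (⇑e) Bf)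
    (𝒟 : V →ₗ[ℝ] V) (h𝒟 : ∀ X Y, g (𝒟 X) Y = Ric X Y)
    (hnl : ¬ ∃ a b : ℝ, ∀ X Y, Ric (𝒟 X) Y = a * g X Y + b * Ric X Y)
    (φ β₁ β₂ β₃ : ℝ)
    (hdec : ∀ X₁ X₂ X₃ X₄, Bf X₁ X₂ X₃ X₄
      = (φ / 2) * KN Ric Ric X₁ X₂ X₃ X₄
        + β₁ * KN (fun X Y => g X Y) (fun X Y => Ric (𝒟 X) Y) X₁ X₂ X₃ X₄
        + β₂ * KN (fun X Y => g X Y) Ric X₁ X₂ X₃ X₄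
        + (β₃ / 2) * KN (fun X Y => g X Y) (fun X Y => g X Y) X₁ X₂ X₃ X₄) :
    β₁ = φ / ((n : ℝ) - 2) ∧
    β₂ = (1 - κ * φ) / ((n : ℝ) - 2) ∧
    β₃ = (((κ ^ 2 - LinearMap.trace ℝ V (𝒟 ∘ₗ 𝒟)) * φ) - κ)
      / (((n : ℝ) - 2) * ((n : ℝ) - 1)) := by
  set τ := LinearMap.trace ℝ V (𝒟 ∘ₗ 𝒟) with hτdef
  have hεsq : ∀ j, ε j * ε j = 1 := by
    intro j; rcases hε j with h | h <;> rw [h] <;> norm_num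
  have hRg : ∀ U W : V, Ric U W = g (𝒟 U) W := fun U W => (h𝒟 U W).symm
  have flip34 : ∀ a b c d : V, Bf a b c d = - Bf a b d c := by
    intro a b c d
    rw [hB2 a b c d, hB1 c d a b, hB2 d c a b]
  have hRsymm : ∀ U W : V, Ric U W = Ric W U := by
    intro U W
    rw [hRic]
    show ∑ j, ε j * Bf (e j) U W (e j) = ∑ j, ε j * Bf (e j) W U (e j)
    refine Finset.sum_congr rfl fun j _ => ?_
    have h : Bf (e j) U W (e j) = Bf (e j) W U (e j) := by
      rw [hB2 (e j) U W (e j), hB1 W (e j) (e j) U, flip34 (e j) W (e j) U]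
      ring
    rw [h]
  have hadj : ∀ U W : V, g (𝒟 U) W = g U (𝒟 W) := by
    intro U W
    rw [h𝒟 U W, hRsymm U W, ← h𝒟 W U, hgsymm (𝒟 W) U]
  have hDsw : ∀ U W : V, g (𝒟 U) W = g (𝒟 W) U := by
    intro U W; rw [h𝒟 U W, h𝒟 W U]; exact hRsymm U W
  have hD2 : ∀ U W : V, g (𝒟 (𝒟 U)) W = g (𝒟 (𝒟 W)) U := by
    intro U W; rw [hadj (𝒟 U) W, hDsw U (𝒟 W)]
  have hrepr : ∀ (Z : V) (j : Fin n), e.repr Z j = ε j * g Z (e j) := by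
    intro Z j
    have h1 : g Z (e j) = ∑ k, e.repr Z k * g (e k) (e j) := by
      conv_lhs => rw [← e.sum_repr Z]
      rw [map_sum, LinearMap.sum_apply]
      simp only [map_smul, LinearMap.smul_apply, smul_eq_mul]
    rw [h1]
    simp only [he, mul_ite, mul_zero, Finset.sum_ite_eq', Finset.mem_univ, if_true]
    rcases hε j with h | h <;> rw [h] <;> ring
  have hM1 : ∀ U W : V, ∑ j, ε j * (g U (e j) * g W (e j)) = g U W := by
    intro U W
    have h1 : ∀ j : Fin n, ε j * (g U (e j) * g W (e j)) = e.repr U j * g (e j) W := by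
      intro j; rw [hrepr U j, hgsymm (e j) W]; ring
    rw [Finset.sum_congr rfl fun j _ => h1 j]
    conv_rhs => rw [← e.sum_repr U]
    rw [map_sum, LinearMap.sum_apply]
    simp only [map_smul, LinearMap.smul_apply, smul_eq_mul]
  have hκg : ∑ j, ε j * g (𝒟 (e j)) (e j) = κ := by
    rw [hκ, scal]
    refine Finset.sum_congr rfl fun j _ => ?_
    rw [← hRic, hRg]
  have hτg : ∑ j, ε j * g (𝒟 (𝒟 (e j))) (e j) = τ := by
    rw [hτdef, LinearMap.trace_eq_matrix_trace ℝ e (𝒟 ∘ₗ 𝒟), Matrix.trace]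
    simp only [Matrix.diag_apply, LinearMap.toMatrix_apply, LinearMap.comp_apply]
    refine Finset.sum_congr rfl fun j _ => ?_
    rw [hrepr]
  have hng : ∑ j, ε j * g (e j) (e j) = (n : ℝ) := by
    have h1 : ∀ j : Fin n, ε j * g (e j) (e j) = 1 := by
      intro j; rw [he j j, if_pos rfl]; exact hεsq j
    rw [Finset.sum_congr rfl fun j _ => h1 j]
    simp
  have key : ∀ X Y : V,
      (β₁ * ((n : ℝ) - 2) - φ) * g (𝒟 (𝒟 X)) Y
        = (1 - φ * κ - β₂ * ((n : ℝ) - 2)) * g (𝒟 X) Y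
          - (β₁ * τ + β₂ * κ + β₃ * ((n : ℝ) - 1)) * g X Y := by
    intro X Y
    have h2 : ∀ j : Fin n, ε j * Bf (e j) X Y (e j) =
        (φ * g (𝒟 X) Y + β₂ * g X Y) * (ε j * g (𝒟 (e j)) (e j))
        + (β₁ * g X Y) * (ε j * g (𝒟 (𝒟 (e j))) (e j))
        + (β₁ * g (𝒟 (𝒟 X)) Y + β₂ * g (𝒟 X) Y + β₃ * g X Y) * (ε j * g (e j) (e j))
        - φ * (ε j * (g (𝒟 Y) (e j) * g (𝒟 X) (e j)))
        - β₁ * (ε j * (g Y (e j) * g (𝒟 (𝒟 X)) (e j)))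
        - β₁ * (ε j * (g X (e j) * g (𝒟 (𝒟 Y)) (e j)))
        - β₂ * (ε j * (g Y (e j) * g (𝒟 X) (e j)))
        - β₂ * (ε j * (g X (e j) * g (𝒟 Y) (e j)))
        - β₃ * (ε j * (g Y (e j) * g X (e j))) := by
      intro j
      rw [hdec (e j) X Y (e j)]
      simp only [KN, hRg]
      rw [hD2 (e j) Y, hDsw (e j) Y, hgsymm (e j) Y]
      ring
    have h3 : Ric X Y =
        (φ * g (𝒟 X) Y + β₂ * g X Y) * κ
        + (β₁ * g X Y) * τ
        + (β₁ * g (𝒟 (𝒟 X)) Y + β₂ * g (𝒟 X) Y + β₃ * g X Y) * (n : ℝ)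
        - φ * g (𝒟 Y) (𝒟 X)
        - β₁ * g Y (𝒟 (𝒟 X))
        - β₁ * g X (𝒟 (𝒟 Y))
        - β₂ * g Y (𝒟 X)
        - β₂ * g X (𝒟 Y)
        - β₃ * g Y X := by
      calc Ric X Y = ∑ j, ε j * Bf (e j) X Y (e j) := by rw [hRic]; rfl
        _ = ∑ j, ((φ * g (𝒟 X) Y + β₂ * g X Y) * (ε j * g (𝒟 (e j)) (e j))
            + (β₁ * g X Y) * (ε j * g (𝒟 (𝒟 (e j))) (e j))
            + (β₁ * g (𝒟 (𝒟 X)) Y + β₂ * g (𝒟 X) Y + β₃ * g X Y) * (ε j * g (e j) (e j))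
            - φ * (ε j * (g (𝒟 Y) (e j) * g (𝒟 X) (e j)))
            - β₁ * (ε j * (g Y (e j) * g (𝒟 (𝒟 X)) (e j)))
            - β₁ * (ε j * (g X (e j) * g (𝒟 (𝒟 Y)) (e j)))
            - β₂ * (ε j * (g Y (e j) * g (𝒟 X) (e j)))
            - β₂ * (ε j * (g X (e j) * g (𝒟 Y) (e j)))
            - β₃ * (ε j * (g Y (e j) * g X (e j)))) :=
          Finset.sum_congr rfl fun j _ => h2 j
        _ = _ := by
          simp only [Finset.sum_sub_distrib, Finset.sum_add_distrib, ← Finset.mul_sum]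
          rw [hκg, hτg, hng, hM1 (𝒟 Y) (𝒟 X), hM1 Y (𝒟 (𝒟 X)), hM1 X (𝒟 (𝒟 Y)),
            hM1 Y (𝒟 X), hM1 X (𝒟 Y), hM1 Y X]
    rw [hRg X Y, hDsw Y (𝒟 X), hgsymm Y (𝒟 (𝒟 X)), hgsymm X (𝒟 (𝒟 Y)), hD2 Y X,
      hgsymm Y (𝒟 X), hgsymm X (𝒟 Y), hDsw Y X, hgsymm Y X] at h3
    linear_combination -h3
  have h42 : (4 : ℝ) ≤ (n : ℝ) := by exact_mod_cast hn
  have h2pos : (0 : ℝ) < (n : ℝ) - 2 := by linarith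
  have h1pos : (0 : ℝ) < (n : ℝ) - 1 := by linarith
  have h2ne : (n : ℝ) - 2 ≠ 0 := h2pos.ne'
  have h1ne : (n : ℝ) - 1 ≠ 0 := h1pos.ne'
  have hc : β₁ * ((n : ℝ) - 2) - φ = 0 := by
    by_contra hc0
    apply hnl
    refine ⟨-(β₁ * τ + β₂ * κ + β₃ * ((n : ℝ) - 1)) / (β₁ * ((n : ℝ) - 2) - φ),
      (1 - φ * κ - β₂ * ((n : ℝ) - 2)) / (β₁ * ((n : ℝ) - 2) - φ), fun X Y => ?_⟩
    rw [hRg (𝒟 X) Y, hRg X Y]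
    field_simp
    linear_combination key X Y
  have key2 : ∀ X Y : V, (1 - φ * κ - β₂ * ((n : ℝ) - 2)) * g (𝒟 X) Y
      - (β₁ * τ + β₂ * κ + β₃ * ((n : ℝ) - 1)) * g X Y = 0 := by
    intro X Y
    have h := key X Y
    rw [hc, zero_mul] at h
    linarith
  have hc1 : 1 - φ * κ - β₂ * ((n : ℝ) - 2) = 0 := by
    by_contra h
    apply hnl
    refine ⟨0, (β₁ * τ + β₂ * κ + β₃ * ((n : ℝ) - 1))
      / (1 - φ * κ - β₂ * ((n : ℝ) - 2)), fun X Y => ?_⟩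
    have k1 := key2 (𝒟 X) Y
    rw [hRg (𝒟 X) Y, hRg X Y]
    have hinv : (1 - φ * κ - β₂ * ((n : ℝ) - 2))⁻¹ * (1 - φ * κ - β₂ * ((n : ℝ) - 2)) = 1 :=
      inv_mul_cancel₀ h
    linear_combination (1 - φ * κ - β₂ * ((n : ℝ) - 2))⁻¹ * k1 - g (𝒟 (𝒟 X)) Y * hinv
  have hc0 : β₁ * τ + β₂ * κ + β₃ * ((n : ℝ) - 1) = 0 := by
    have hn0 : 0 < n := by omega
    set i0 : Fin n := ⟨0, hn0⟩
    have k := key2 (e i0) (e i0)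
    rw [hc1, zero_mul] at k
    have hg0 : g (e i0) (e i0) = ε i0 := by rw [he i0 i0, if_pos rfl]
    rw [hg0] at k
    rcases hε i0 with h | h <;> rw [h] at k <;> linarith
  refine ⟨?_, ?_, ?_⟩
  · field_simp
    linarith
  · field_simp
    linear_combination -hc1
  · field_simp
    linear_combination ((n : ℝ) - 2) * hc0 - τ * hc + κ * hc1

end OVAff
end

section
/- Let n ≥ 3, let V be an n-dimensional real vector space with a nondegenerate symmetric bilinear form g, and let A be a symmetric bilinear form on V with rank(A) = 2. Then: (a) A³ = tr(A)·A² + (1/2)(tr(A²) − (tr A)²)·A; (b) A∧A² = (1/2)·tr(A)·A∧A; (c) A²∧A² = −(1/2)(tr(A²) − (tr A)²)·A∧A; (d) (A² − tr(A)·A)∧(A² − tr(A)·A) = −(1/2)(tr(A²) − (tr A)²)·A∧A. -/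
namespace OVAff

variable {V : Type*} [AddCommGroup V] [Module ℝ V]

/-- Auxiliary: from nondegeneracy and independence of `u, v`, produce a vector `Y`
with `g u Y = 1` and `g v Y = 0`. -/
theorem exists_dual_pair
    {V : Type*} [AddCommGroup V] [Module ℝ V]
    (g : LinearMap.BilinForm ℝ V)
    (hgnd : ∀ X : V, (∀ Y, g X Y = 0) → X = 0)
    (u v : V) (hind : ∀ s t : ℝ, s • u + t • v = 0 → s = 0 ∧ t = 0) :
    ∃ Y, g u Y = 1 ∧ g v Y = 0 := by
  have hv : v ≠ 0 := by
    intro h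
    have := hind 0 1 (by simp [h])
    exact one_ne_zero this.2
  -- find Z with g v Z ≠ 0
  have hZ : ∃ Z, g v Z ≠ 0 := by
    by_contra h
    push_neg at h
    exact hv (hgnd v h)
  obtain ⟨Z, hZ⟩ := hZ
  set k : ℝ := g u Z / g v Z with hk
  have huv : u - k • v ≠ 0 := by
    intro h
    have h' : (1 : ℝ) • u + (-k) • v = 0 := by
      rw [one_smul, neg_smul, ← sub_eq_add_neg]; exact h
    exact one_ne_zero (hind 1 (-k) h').1
  have hY : ∃ Y, g (u - k • v) Y ≠ 0 := by
    by_contra h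
    push_neg at h
    exact huv (hgnd _ h)
  obtain ⟨Y, hY⟩ := hY
  have hYval : g (u - k • v) Y = g u Y - k * g v Y := by
    simp [map_sub, map_smul, smul_eq_mul]
  set c : ℝ := g u Y - k * g v Y with hc
  have hcne : c ≠ 0 := hYval ▸ hY
  refine ⟨(1 / c) • (Y - (g v Y / g v Z) • Z), ?_, ?_⟩
  · have h1 : g u (Y - (g v Y / g v Z) • Z) = g u Y - (g v Y / g v Z) * g u Z := by
      simp [map_sub, map_smul, smul_eq_mul]
    have h3 : g u Y - (g v Y / g v Z) * g u Z = c := by rw [hc, hk]; ring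
    rw [map_smul, smul_eq_mul, h1, h3, one_div, inv_mul_cancel₀ hcne]
  · have h1 : g v (Y - (g v Y / g v Z) • Z) = g v Y - (g v Y / g v Z) * g v Z := by
      simp [map_sub, map_smul, smul_eq_mul]
    rw [map_smul, smul_eq_mul, h1]
    field_simp
    simp

/-- Kulkarni–Nomizu identities for a symmetric (0,2)-tensor of rank 2. -/
theorem statement19
    {V : Type*} [AddCommGroup V] [Module ℝ V]
    (n : ℕ) (hn : 3 ≤ n)
    (g : LinearMap.BilinForm ℝ V)
    (hgsymm : ∀ X Y, g X Y = g Y X)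
    (hgnd : ∀ X : V, (∀ Y, g X Y = 0) → X = 0)
    [FiniteDimensional ℝ V] (hdim : Module.finrank ℝ V = n)
    (𝒜 : V →ₗ[ℝ] V) (hsa : ∀ X Y, g (𝒜 X) Y = g X (𝒜 Y))
    (A : V → V → ℝ) (hA : A = fun X Y => g (𝒜 X) Y)
    (hrank : LinearMap.rank 𝒜 = 2)
    (A2 : V → V → ℝ) (hA2 : A2 = fun X Y => A (𝒜 X) Y)
    (A3 : V → V → ℝ) (hA3 : A3 = fun X Y => A (𝒜 (𝒜 X)) Y) :
    (∀ X Y, A3 X Y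
      = LinearMap.trace ℝ V 𝒜 * A2 X Y
        + (1 / 2 : ℝ) * (LinearMap.trace ℝ V (𝒜 ∘ₗ 𝒜) - (LinearMap.trace ℝ V 𝒜) ^ 2)
          * A X Y) ∧
    (∀ X₁ X₂ X₃ X₄, KN A A2 X₁ X₂ X₃ X₄
      = (1 / 2 : ℝ) * LinearMap.trace ℝ V 𝒜 * KN A A X₁ X₂ X₃ X₄) ∧
    (∀ X₁ X₂ X₃ X₄, KN A2 A2 X₁ X₂ X₃ X₄
      = -(1 / 2 : ℝ) * (LinearMap.trace ℝ V (𝒜 ∘ₗ 𝒜) - (LinearMap.trace ℝ V 𝒜) ^ 2)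
        * KN A A X₁ X₂ X₃ X₄) ∧
    (∀ X₁ X₂ X₃ X₄,
      KN (fun X Y => A2 X Y - LinearMap.trace ℝ V 𝒜 * A X Y)
         (fun X Y => A2 X Y - LinearMap.trace ℝ V 𝒜 * A X Y) X₁ X₂ X₃ X₄
        = -(1 / 2 : ℝ) * (LinearMap.trace ℝ V (𝒜 ∘ₗ 𝒜) - (LinearMap.trace ℝ V 𝒜) ^ 2)
          * KN A A X₁ X₂ X₃ X₄) := by
  classical
  -- basis of the range of 𝒜
  have hfin : Module.finrank ℝ (LinearMap.range 𝒜) = 2 :=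
    Module.finrank_eq_of_rank_eq (by exact_mod_cast hrank)
  let B : Module.Basis (Fin 2) ℝ (LinearMap.range 𝒜) := Module.finBasisOfFinrankEq ℝ _ hfin
  set w0 : V := (B 0 : V) with hw0
  set w1 : V := (B 1 : V) with hw1
  let f0 : V →ₗ[ℝ] ℝ := B.coord 0 ∘ₗ 𝒜.rangeRestrict
  let f1 : V →ₗ[ℝ] ℝ := B.coord 1 ∘ₗ 𝒜.rangeRestrict
  have hexp : ∀ X, 𝒜 X = f0 X • w0 + f1 X • w1 := by
    intro X
    have h := B.sum_repr (𝒜.rangeRestrict X)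
    have h2 := congrArg (Submodule.subtype (LinearMap.range 𝒜)) h
    simp only [map_sum, map_smul, Fin.sum_univ_two, Submodule.subtype_apply] at h2
    simpa [f0, f1, hw0, hw1, Module.Basis.coord_apply] using h2.symm
  -- linear independence of w0, w1
  have hind : ∀ s t : ℝ, s • w0 + t • w1 = 0 → s = 0 ∧ t = 0 := by
    intro s t h
    have h' : s • (B 0) + t • (B 1) = 0 := by
      apply Subtype.ext
      simpa [hw0, hw1] using h
    have h0 := congrArg (fun z => B.repr z 0) h'
    have h1 := congrArg (fun z => B.repr z 1) h'
    simp [Module.Basis.repr_self] at h0 h1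
    exact ⟨h0, h1⟩
  have hind' : ∀ s t : ℝ, s • w1 + t • w0 = 0 → s = 0 ∧ t = 0 := by
    intro s t h
    have := hind t s (by rw [add_comm]; exact h)
    exact ⟨this.2, this.1⟩
  obtain ⟨Y0, hY00, hY01⟩ := exists_dual_pair g hgnd w0 w1 hind
  obtain ⟨Y1, hY11, hY10⟩ := exists_dual_pair g hgnd w1 w0 hind'
  -- basic value formulas
  have hAval : ∀ X Y, A X Y = f0 X * g w0 Y + f1 X * g w1 Y := by
    intro X Y
    rw [hA]
    show g (𝒜 X) Y = _
    rw [hexp X]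
    simp [smul_eq_mul]
  have hsymmA : ∀ X Y, A X Y = A Y X := by
    intro X Y
    rw [hA]
    show g (𝒜 X) Y = g (𝒜 Y) X
    rw [hsa, hgsymm]
  set p : ℝ := f0 Y0 with hp
  set q : ℝ := f1 Y0 with hq
  set r : ℝ := f1 Y1 with hr
  have hF0 : ∀ X, f0 X = p * g w0 X + q * g w1 X := by
    intro X
    have h1 : A X Y0 = f0 X := by rw [hAval, hY00, hY01]; ring
    have h2 : A Y0 X = p * g w0 X + q * g w1 X := by rw [hAval]
    rw [← h1, hsymmA, h2]
  have hqq : f0 Y1 = q := by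
    have h1 : A Y1 Y0 = f0 Y1 := by rw [hAval, hY00, hY01]; ring
    have h2 : A Y0 Y1 = q := by rw [hAval, hY10, hY11]; ring
    rw [← h1, hsymmA, h2]
  have hF1 : ∀ X, f1 X = q * g w0 X + r * g w1 X := by
    intro X
    have h1 : A X Y1 = f1 X := by rw [hAval, hY10, hY11]; ring
    have h2 : A Y1 X = q * g w0 X + r * g w1 X := by rw [hAval, hqq]
    rw [← h1, hsymmA, h2]
  have hb' : g w1 w0 = g w0 w1 := hgsymm _ _
  have hg0A : ∀ X, g w0 (𝒜 X) = f0 X * g w0 w0 + f1 X * g w0 w1 := by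
    intro X
    rw [hexp X]
    simp [smul_eq_mul]
  have hg1A : ∀ X, g w1 (𝒜 X) = f0 X * g w0 w1 + f1 X * g w1 w1 := by
    intro X
    rw [hexp X]
    simp [smul_eq_mul, hb']
  -- traces
  have h𝒜eq : 𝒜 = dualTensorHom ℝ V V (f0 ⊗ₜ w0) + dualTensorHom ℝ V V (f1 ⊗ₜ w1) := by
    ext X
    simp [dualTensorHom_apply, hexp X]
  have ht : LinearMap.trace ℝ V 𝒜 = f0 w0 + f1 w1 := by
    rw [h𝒜eq, map_add, LinearMap.trace_eq_contract_apply, LinearMap.trace_eq_contract_apply,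
      contractLeft_apply, contractLeft_apply]
  have h𝒜2eq : 𝒜 ∘ₗ 𝒜
      = dualTensorHom ℝ V V ((f0 ∘ₗ 𝒜) ⊗ₜ w0) + dualTensorHom ℝ V V ((f1 ∘ₗ 𝒜) ⊗ₜ w1) := by
    ext X
    simp [dualTensorHom_apply, hexp (𝒜 X)]
  have ht2 : LinearMap.trace ℝ V (𝒜 ∘ₗ 𝒜) = f0 (𝒜 w0) + f1 (𝒜 w1) := by
    rw [h𝒜2eq, map_add, LinearMap.trace_eq_contract_apply, LinearMap.trace_eq_contract_apply,
      contractLeft_apply, contractLeft_apply]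
    simp
  have hA2val : ∀ X Y, A2 X Y = f0 (𝒜 X) * g w0 Y + f1 (𝒜 X) * g w1 Y := by
    intro X Y
    rw [hA2]
    exact hAval (𝒜 X) Y
  have hA3val : ∀ X Y, A3 X Y = f0 (𝒜 (𝒜 X)) * g w0 Y + f1 (𝒜 (𝒜 X)) * g w1 Y := by
    intro X Y
    rw [hA3]
    exact hAval (𝒜 (𝒜 X)) Y
  refine ⟨?_, ?_, ?_, ?_⟩
  · intro X Y
    rw [hA3val, hA2val, hAval, ht, ht2]
    simp only [hF0, hF1, hg0A, hg1A]
    simp only [hF0, hF1, hb']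
    ring
  · intro X₁ X₂ X₃ X₄
    simp only [KN]
    rw [ht]
    simp only [hA2val, hAval]
    simp only [hF0, hF1, hg0A, hg1A]
    simp only [hF0, hF1, hb']
    ring
  · intro X₁ X₂ X₃ X₄
    simp only [KN]
    rw [ht, ht2]
    simp only [hA2val, hAval]
    simp only [hF0, hF1, hg0A, hg1A]
    simp only [hF0, hF1, hb']
    ring
  · intro X₁ X₂ X₃ X₄
    simp only [KN]
    rw [ht, ht2]
    simp only [hA2val, hAval]
    simp only [hF0, hF1, hg0A, hg1A]
    simp only [hF0, hF1, hb']
    ring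


end OVAff
end
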